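/- arXiv:1802.02684 — 7 statements merged into one kernel-verified Lean document; each statement's English description precedes it below -/
import Mathlib

section
/- For all integers n and k, C(n,k) = C(n, n-k), where C is the generalized binomial coefficient extended to negative arguments. -/
/-- Loeb's generalized binomial coefficient `C : ℤ → ℤ → ℤ`. -/
def genBinom (n k : ℤ) : ℤ :=
  if 0 ≤ k ∧ k ≤ n then (n.toNat.choose k.toNat : ℤ)
  else if n < 0 ∧ 0 ≤ k then (-1) ^ k.toNat * ((k - n - 1).toNat.choose k.toNat : ℤ)
  else if k ≤ n ∧ n < 0 then
    (-1) ^ (n - k).toNat * ((-k - 1).toNat.choose (-n - 1).toNat : ℤ)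
  else 0

theorem genBinom_symm (n k : ℤ) : genBinom n k = genBinom n (n - k) := by
  unfold genBinom
  rcases le_or_gt 0 n with hn | hn
  · by_cases hk : 0 ≤ k ∧ k ≤ n
    · have h2 : 0 ≤ n - k ∧ n - k ≤ n := by omega
      rw [if_pos hk, if_pos h2]
      have e1 : (n - k).toNat = n.toNat - k.toNat := by omega
      rw [e1, Nat.choose_symm (by omega)]
    · have h2 : ¬(0 ≤ n - k ∧ n - k ≤ n) := by omega
      have h3 : ¬(n < 0 ∧ 0 ≤ k) := by omega
      have h4 : ¬(k ≤ n ∧ n < 0) := by omega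
      have h5 : ¬(n < 0 ∧ 0 ≤ n - k) := by omega
      have h6 : ¬(n - k ≤ n ∧ n < 0) := by omega
      rw [if_neg hk, if_neg h2, if_neg h3, if_neg h4, if_neg h5, if_neg h6]
  · by_cases hk : 0 ≤ k
    · have h1 : ¬(0 ≤ k ∧ k ≤ n) := by omega
      have h2 : ¬(0 ≤ n - k ∧ n - k ≤ n) := by omega
      have h3 : ¬(n < 0 ∧ 0 ≤ n - k) := by omega
      have h4 : n - k ≤ n ∧ n < 0 := by omega
      rw [if_neg h1, if_pos ⟨hn, hk⟩, if_neg h2, if_neg h3, if_pos h4]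
      have e1 : (n - (n - k)).toNat = k.toNat := by omega
      have e2 : (-(n - k) - 1).toNat = (k - n - 1).toNat := by omega
      have e3 : (-n - 1).toNat = (k - n - 1).toNat - k.toNat := by omega
      rw [e1, e2, e3, Nat.choose_symm (by omega)]
    · by_cases hk2 : k ≤ n
      · have h1 : ¬(0 ≤ k ∧ k ≤ n) := by omega
        have h2 : ¬(n < 0 ∧ 0 ≤ k) := by omega
        have h4 : ¬(0 ≤ n - k ∧ n - k ≤ n) := by omega
        have h5 : n < 0 ∧ 0 ≤ n - k := by omega
        rw [if_neg h1, if_neg h2, if_pos ⟨hk2, hn⟩, if_neg h4, if_pos h5]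
        have e1 : (n - k - n - 1).toNat = (-k - 1).toNat := by omega
        have e3 : (-n - 1).toNat = (-k - 1).toNat - (n - k).toNat := by omega
        rw [e1, e3, Nat.choose_symm (by omega)]
      · have h1 : ¬(0 ≤ k ∧ k ≤ n) := by omega
        have h2 : ¬(n < 0 ∧ 0 ≤ k) := by omega
        have h3 : ¬(k ≤ n ∧ n < 0) := by omega
        have h4 : ¬(0 ≤ n - k ∧ n - k ≤ n) := by omega
        have h5 : ¬(n < 0 ∧ 0 ≤ n - k) := by omega
        have h6 : ¬(n - k ≤ n ∧ n < 0) := by omega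
        rw [if_neg h1, if_neg h2, if_neg h3, if_neg h4, if_neg h5, if_neg h6]
end

section
/- Let p be a prime. For all integers n and k, writing n = n₀ + n'·p and k = k₀ + k'·p with n₀, k₀ ∈ {0, 1, ..., p-1}, one has C(n,k) ≡ C(n₀,k₀) · C(n',k') (mod p). (Lucas' theorem for binomial coefficients with arbitrary integer entries.) -/
namespace GenBinomLucas

open Polynomial

lemma fac_mul (x : ℤ) (K : ℕ) :
    (K.factorial : ℤ) * Ring.choose x K = (descPochhammer ℤ K).eval x := by
  rw [eval_eq_smeval, Ring.descPochhammer_eq_factorial_smul_choose, nsmul_eq_mul]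

lemma neg_id (x : ℤ) (K : ℕ) :
    Ring.choose ((K : ℤ) - 1 - x) K = (-1) ^ K * Ring.choose x K := by
  have hf : (K.factorial : ℤ) ≠ 0 := by exact_mod_cast K.factorial_ne_zero
  apply mul_left_cancel₀ hf
  have h := fac_mul ((K : ℤ) - 1 - x) K
  rw [descPochhammer_eval_eq_ascPochhammer, show ((K:ℤ) - 1 - x - K + 1) = -x by ring,
    ascPochhammer_eval_neg_eq_descPochhammer, ← fac_mul] at h
  rw [h]; ring

lemma choose_int_nonneg {x : ℤ} (hx : 0 ≤ x) (K : ℕ) :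
    Ring.choose x K = (x.toNat.choose K : ℤ) := by
  conv_lhs => rw [← Int.toNat_of_nonneg hx]
  rw [Ring.choose_natCast]

lemma choose_int_zero {x : ℤ} (hx : 0 ≤ x) {K : ℕ} (h : x < K) : Ring.choose x K = 0 := by
  rw [choose_int_nonneg hx, Nat.choose_eq_zero_of_lt (by omega)]
  simp

lemma digit_eq (p : ℕ) (hpp : 0 < p) {r q a : ℤ} (h : a = r + q * p) (h0 : 0 ≤ r) (h1 : r < p) :
    a % p = r ∧ a / p = q := by
  have hp0 : (0:ℤ) < p := by exact_mod_cast hpp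
  subst h
  refine ⟨?_, ?_⟩
  · rw [Int.add_mul_emod_self_right, Int.emod_eq_of_lt h0 h1]
  · rw [Int.add_mul_ediv_right _ _ hp0.ne', Int.ediv_eq_zero_of_lt h0 h1, zero_add]

section
variable {p : ℕ} [hp : Fact p.Prime]

lemma key (x : ℤ) (K : ℕ) :
    (K.factorial : ZMod p) * ((Ring.choose x K : ℤ) : ZMod p)
      = (descPochhammer (ZMod p) K).eval (x : ZMod p) := by
  have h := congrArg (fun t : ℤ => ((t : ZMod p))) (fac_mul x K)
  simp only [Int.cast_mul, Int.cast_natCast] at h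
  rw [h, ← descPochhammer_map (Int.castRingHom (ZMod p)) K, eval_intCast_map]
  rfl

lemma congr_c {K : ℕ} (hK : K < p) {x y : ℤ} (h : (x : ZMod p) = (y : ZMod p)) :
    ((Ring.choose x K : ℤ) : ZMod p) = ((Ring.choose y K : ℤ) : ZMod p) := by
  have hf : (K.factorial : ZMod p) ≠ 0 := by
    rw [Ne, ZMod.natCast_eq_zero_iff]
    intro hd
    exact absurd ((Nat.Prime.dvd_factorial hp.out).mp hd) (by omega)
  apply mul_left_cancel₀ hf
  rw [key, key, h]

lemma natLucas (a b : ℕ) :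
    ((a.choose b : ℤ) : ZMod p)
      = (((a % p).choose (b % p) : ℤ) : ZMod p) * (((a / p).choose (b / p) : ℤ) : ZMod p) := by
  have h := (ZMod.intCast_eq_intCast_iff _ _ _).mpr
    (Choose.choose_modEq_choose_mod_mul_choose_div (n := a) (k := b) (p := p))
  push_cast at h ⊢
  exact h

lemma Lpos (M K : ℕ) :
    ((Ring.choose (M : ℤ) K : ℤ) : ZMod p)
      = ((Ring.choose ((M : ℤ) % p) (K % p) : ℤ) : ZMod p)
        * ((Ring.choose ((M : ℤ) / p) (K / p) : ℤ) : ZMod p) := by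
  have e1 : ((M : ℤ) % p) = ((M % p : ℕ) : ℤ) := by push_cast; ring
  have e2 : ((M : ℤ) / p) = ((M / p : ℕ) : ℤ) := by rw [Int.natCast_ediv]
  rw [e1, e2, Ring.choose_natCast, Ring.choose_natCast, Ring.choose_natCast]
  exact natLucas M K

lemma sign_split (K : ℕ) : ((-1 : ZMod p)) ^ K = (-1) ^ (K % p) * (-1) ^ (K / p) := by
  conv_lhs => rw [← Nat.mod_add_div K p]
  rw [pow_add, pow_mul, show ((-1 : ZMod p))^p = -1 from neg_one_pow_char (ZMod p) p]

lemma L (x : ℤ) (K : ℕ) :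
    ((Ring.choose x K : ℤ) : ZMod p)
      = ((Ring.choose (x % p) (K % p) : ℤ) : ZMod p)
        * ((Ring.choose (x / p) (K / p) : ℤ) : ZMod p) := by
  have hp0 : (0:ℤ) < p := by exact_mod_cast hp.out.pos
  rcases le_or_gt 0 x with hx | hx
  · obtain ⟨M, rfl⟩ := Int.eq_ofNat_of_zero_le hx
    exact Lpos M K
  · obtain ⟨M, hM⟩ : ∃ M : ℕ, (M : ℤ) = (K : ℤ) - 1 - x :=
      ⟨((K : ℤ) - 1 - x).toNat, Int.toNat_of_nonneg (by omega)⟩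
    have hCx : Ring.choose x K = (-1) ^ K * Ring.choose ((K:ℤ) - 1 - x) K := by
      rw [neg_id, ← mul_assoc, ← mul_pow]; norm_num
    have hstart : ((Ring.choose x K : ℤ) : ZMod p)
        = (-1) ^ K * ((Ring.choose (M : ℤ) K : ℤ) : ZMod p) := by
      rw [hCx, ← hM]; push_cast; ring
    have hx0 := Int.emod_nonneg x hp0.ne'
    have hx1 := Int.emod_lt_of_pos x hp0
    have hxe := Int.emod_add_mul_ediv x p
    have hK1 : ((K % p : ℕ) : ℤ) < p := by exact_mod_cast Nat.mod_lt K hp.out.pos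
    have hKe : (K : ℤ) = ((K % p : ℕ) : ℤ) + (p : ℤ) * ((K / p : ℕ) : ℤ) := by
      exact_mod_cast (Nat.mod_add_div K p).symm
    set x₀ := x % p with hx₀
    set x' := x / p with hx'
    rcases lt_or_ge x₀ ((K % p : ℕ) : ℤ) with hc | hc
    · have hdig := digit_eq p hp.out.pos (r := ((K % p : ℕ) : ℤ) - 1 - x₀)
        (q := ((K / p : ℕ) : ℤ) - x') (a := (M : ℤ))
        (by linear_combination hM + hKe + hxe) (by omega) (by omega)
      have h1 : Ring.choose ((M : ℤ) % p) (K % p) = 0 :=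
        choose_int_zero (by rw [hdig.1]; omega) (by rw [hdig.1]; omega)
      have h2 : Ring.choose x₀ (K % p) = 0 := choose_int_zero (by omega) (by omega)
      rw [hstart, Lpos, h1, h2]
      push_cast
      ring
    · have hdig := digit_eq p hp.out.pos (r := ((K % p : ℕ) : ℤ) - 1 - x₀ + p)
        (q := ((K / p : ℕ) : ℤ) - x' - 1) (a := (M : ℤ))
        (by linear_combination hM + hKe + hxe) (by omega) (by omega)
      have h2 : Ring.choose ((M:ℤ) / p) (K / p) = (-1) ^ (K / p) * Ring.choose x' (K / p) := by
        rw [hdig.2, show ((K / p : ℕ) : ℤ) - x' - 1 = ((K / p : ℕ) : ℤ) - 1 - x' by ring, neg_id]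
      have h1 : ((Ring.choose ((M:ℤ) % p) (K % p) : ℤ) : ZMod p)
          = ((((-1) ^ (K % p) * Ring.choose x₀ (K % p) : ℤ)) : ZMod p) := by
        rw [hdig.1, ← neg_id]
        apply congr_c (Nat.mod_lt K hp.out.pos)
        push_cast
        rw [ZMod.natCast_self]
        ring
      rw [hstart, Lpos, h1, h2, sign_split]
      push_cast
      ring_nf
      rw [pow_mul', pow_mul', neg_one_sq, one_pow, one_pow, mul_one, mul_one]

end

lemma genBinom_of_nonneg {n k : ℤ} (hk : 0 ≤ k) :
    genBinom n k = Ring.choose n k.toNat := by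
  rcases lt_or_ge n 0 with hn | hn
  · rw [genBinom, if_neg (by omega), if_pos ⟨hn, hk⟩]
    have h2 : ((k.toNat : ℤ)) - 1 - n = k - n - 1 := by omega
    have h1 := neg_id n k.toNat
    rw [h2, choose_int_nonneg (x := k - n - 1) (by omega)] at h1
    rw [h1, ← mul_assoc, ← mul_pow]
    norm_num
  · rcases le_or_gt k n with h | h
    · rw [genBinom, if_pos ⟨hk, h⟩, choose_int_nonneg hn]
    · rw [genBinom, if_neg (by omega), if_neg (by omega), if_neg (by omega),
        choose_int_zero hn (by omega)]

lemma genBinom_neg_neg {n k : ℤ} (hkn : k ≤ n) (hn : n < 0) :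
    genBinom n k = (-1) ^ ((n - k).toNat) * Ring.choose (-k - 1) ((n - k).toNat) := by
  rw [genBinom, if_neg (by omega), if_neg (by omega), if_pos ⟨hkn, hn⟩]
  congr 1
  rw [choose_int_nonneg (x := -k-1) (by omega)]
  norm_cast
  rw [show (n - k).toNat = (-k-1).toNat - (-n-1).toNat by omega,
    Nat.choose_symm (by omega)]

lemma genBinom_eq_zero {n k : ℤ} (hk : k < 0) (h : ¬(k ≤ n ∧ n < 0)) : genBinom n k = 0 := by
  rw [genBinom, if_neg (by omega), if_neg (by omega), if_neg h]

end GenBinomLucas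

open GenBinomLucas in
theorem genBinom_lucas (p : ℕ) (hp : p.Prime) (n k : ℤ) :
    genBinom n k ≡ genBinom (n % p) (k % p) * genBinom (n / p) (k / p) [ZMOD p] := by
  haveI : Fact p.Prime := ⟨hp⟩
  have hp0 : (0:ℤ) < p := by exact_mod_cast hp.pos
  rw [← ZMod.intCast_eq_intCast_iff, Int.cast_mul]
  have hk₀0 := Int.emod_nonneg k hp0.ne'
  have hk₀1 := Int.emod_lt_of_pos k hp0
  have hn₀0 := Int.emod_nonneg n hp0.ne'
  have hn₀1 := Int.emod_lt_of_pos n hp0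
  have hne := Int.emod_add_mul_ediv n p
  have hke := Int.emod_add_mul_ediv k p
  rcases le_or_gt 0 k with hk | hk
  · -- k ≥ 0 : everything is `Ring.choose` with nonnegative bottom
    have hk' : 0 ≤ k / p := Int.ediv_nonneg hk hp0.le
    have c1 : ((k.toNat % p : ℕ) : ℤ) = k % p := by
      conv_rhs => rw [← Int.toNat_of_nonneg hk]
      push_cast
      ring
    have c2 : ((k.toNat / p : ℕ) : ℤ) = k / p := by
      conv_rhs => rw [← Int.toNat_of_nonneg hk]
      rw [Int.natCast_ediv]
    have e1 : (k % p).toNat = k.toNat % p := by omega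
    have e2 : (k / p).toNat = k.toNat / p := by omega
    rw [genBinom_of_nonneg hk, genBinom_of_nonneg hk₀0, genBinom_of_nonneg hk', e1, e2]
    exact L n k.toNat
  · have hk' : k / p < 0 := Int.ediv_neg_of_neg_of_pos hk hp0
    rcases le_or_gt 0 n with hn | hn
    · -- k < 0 ≤ n : both sides vanish
      have hn' : 0 ≤ n / p := Int.ediv_nonneg hn hp0.le
      rw [genBinom_eq_zero hk (by omega), genBinom_eq_zero hk' (by omega)]
      simp
    · rcases le_or_gt k n with hkn | hkn
      · -- main case : k ≤ n < 0
        have hn' : n / p < 0 := Int.ediv_neg_of_neg_of_pos hn hp0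
        have hk'le : k / p ≤ n / p := Int.ediv_le_ediv hp0 hkn
        rw [genBinom_neg_neg hkn hn, genBinom_neg_neg hk'le hn', genBinom_of_nonneg hk₀0]
        have hN : ((n - k).toNat : ℤ) = n - k := Int.toNat_of_nonneg (by omega)
        have hd1 := digit_eq p hp.pos (r := (p:ℤ) - 1 - k % p) (q := -(k / p) - 1)
          (a := -k - 1) (by linear_combination hke) (by omega) (by omega)
        have hL := L (p := p) (-k - 1) (n - k).toNat
        rw [hd1.1, hd1.2] at hL
        rcases le_or_gt (k % p) (n % p) with hcc | hcc
        · -- no borrow in n - k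
          have hd2 := digit_eq p hp.pos (r := n % p - k % p) (q := n / p - k / p)
            (a := ((n - k).toNat : ℤ)) (by rw [hN]; linear_combination hke - hne)
            (by omega) (by omega)
          have cN0 : (((n - k).toNat % p : ℕ) : ℤ) = n % p - k % p := by
            push_cast
            rw [hd2.1]
          have cN' : (((n - k).toNat / p : ℕ) : ℤ) = n / p - k / p := by
            rw [Int.natCast_ediv, hd2.2]
          have eN0 : (n - k).toNat % p = (n % p - k % p).toNat := by omega
          have eN' : (n - k).toNat / p = (n / p - k / p).toNat := by omega
          rw [eN0, eN'] at hL
          have hN₀ : (((n % p - k % p).toNat : ℕ) : ℤ) = n % p - k % p := by omega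
          -- first factor : congruence + reflection
          have f1 : ((Ring.choose ((p:ℤ) - 1 - k % p) (n % p - k % p).toNat : ℤ) : ZMod p)
              = ((((-1) ^ (n % p - k % p).toNat
                  * Ring.choose (n % p) (n % p - k % p).toNat : ℤ)) : ZMod p) := by
            rw [← neg_id]
            apply congr_c (by omega)
            have := congrArg (fun t : ℤ => ((t : ZMod p))) hN₀
            push_cast at this ⊢
            rw [ZMod.natCast_self, this]
            ring
          have f2 : Ring.choose (n % p) (n % p - k % p).toNat
              = Ring.choose (n % p) (k % p).toNat := by
            rw [choose_int_nonneg hn₀0, choose_int_nonneg hn₀0]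
            norm_cast
            rw [show (n % p - k % p).toNat = (n % p).toNat - (k % p).toNat by omega,
              Nat.choose_symm (by omega)]
          -- assemble
          have hsign : (((-1 : ZMod p)) ^ ((n - k).toNat))
              = (-1) ^ (n % p - k % p).toNat * (-1) ^ (n / p - k / p).toNat := by
            rw [sign_split, eN0, eN']
          push_cast
          rw [hL]
          push_cast at f1
          rw [f1, f2, hsign]
          ring_nf
          rw [pow_mul', neg_one_sq, one_pow, mul_one]
        · -- borrow in n - k : both sides vanish
          have hd2 := digit_eq p hp.pos (r := n % p - k % p + p) (q := n / p - k / p - 1)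
            (a := ((n - k).toNat : ℤ)) (by rw [hN]; linear_combination hke - hne)
            (by omega) (by omega)
          have cN0 : (((n - k).toNat % p : ℕ) : ℤ) = n % p - k % p + p := by
            push_cast
            rw [hd2.1]
          have hz : Ring.choose ((p:ℤ) - 1 - k % p) ((n - k).toNat % p) = 0 :=
            choose_int_zero (by omega) (by omega)
          have hz2 : Ring.choose (n % p) (k % p).toNat = 0 :=
            choose_int_zero hn₀0 (by omega)
          rw [hz] at hL
          push_cast
          rw [hL, hz2]
          push_cast
          ring
      · -- n < k < 0 : both sides vanish
        rw [genBinom_eq_zero hk (by omega)]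
        have hle : n / p ≤ k / p := Int.ediv_le_ediv hp0 hkn.le
        rcases eq_or_lt_of_le hle with heq | hlt
        · have hn₀k₀ : n % p < k % p := by
            rw [heq] at hne
            linarith
          rw [genBinom_of_nonneg hk₀0, choose_int_zero hn₀0 (by omega)]
          simp
        · rw [genBinom_eq_zero (n := n / p) (k := k / p) (by omega) (by omega)]
          simp
end

section
/- For all integers n, m, and k with k ≥ 0, the Chu–Vandermonde identity ∑_{j=0}^{k} C(n,j) · C(m,k-j) = C(n+m,k) holds for the generalized binomial coefficient C (valid including negative n and m). -/
open PowerSeries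

/-- `1 - X` as a unit of `ℤ⟦X⟧`. -/
noncomputable def oneSubXU : (PowerSeries ℤ)ˣ :=
  ((PowerSeries.invOneSubPow ℤ 1)⁻¹)

lemma oneSubXU_val : (oneSubXU.val : PowerSeries ℤ) = 1 - X := by
  have := PowerSeries.invOneSubPow_inv_eq_one_sub_pow (S := ℤ) (d := 1)
  simpa [oneSubXU] using this

/-- `1 + X` as a unit of `ℤ⟦X⟧`. -/
noncomputable def onePlusXU : (PowerSeries ℤ)ˣ :=
  Units.map (PowerSeries.rescale (-1 : ℤ)).toMonoidHom oneSubXU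

lemma onePlusXU_val : (onePlusXU.val : PowerSeries ℤ) = 1 + X := by
  show PowerSeries.rescale (-1 : ℤ) oneSubXU.val = 1 + X
  rw [oneSubXU_val]
  ext n
  simp [PowerSeries.coeff_rescale, PowerSeries.coeff_one, coeff_X, sub_eq_add_neg]

lemma coeff_onePlusXU_pow (N j : ℕ) :
    (PowerSeries.coeff (R := ℤ) j) ((onePlusXU ^ (N : ℤ)).val) = (N.choose j : ℤ) := by
  rw [zpow_natCast, Units.val_pow_eq_pow_val, onePlusXU_val]
  rw [add_comm, (Commute.all X 1).add_pow]
  simp only [one_pow, mul_one, map_sum]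
  have key : ∀ x, (PowerSeries.coeff (R := ℤ) j) ((X : PowerSeries ℤ) ^ x * (N.choose x : ℤ⟦X⟧))
      = if j = x then (N.choose x : ℤ) else 0 := by
    intro x
    rw [show ((N.choose x : ℕ) : ℤ⟦X⟧) = PowerSeries.C (R := ℤ) (N.choose x : ℤ) by norm_cast,
      PowerSeries.coeff_X_pow_mul']
    by_cases h : x ≤ j
    · rw [if_pos h, PowerSeries.coeff_C]
      by_cases h2 : j = x
      · simp [h2]
      · rw [if_neg (by omega), if_neg h2]
    · rw [if_neg h, if_neg (by omega)]
  rw [Finset.sum_congr rfl (fun x _ => key x), Finset.sum_ite_eq (Finset.range (N + 1)) j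
    (fun x => (N.choose x : ℤ))]
  split
  · rfl
  · rename_i h
    rw [Finset.mem_range, Nat.lt_succ_iff, not_le] at h
    exact_mod_cast (Nat.choose_eq_zero_of_lt h).symm

lemma coeff_onePlusXU_zpow_neg (N j : ℕ) :
    (PowerSeries.coeff (R := ℤ) j) ((onePlusXU ^ (Int.negSucc N)).val) =
      (-1) ^ j * ((N + j).choose N : ℤ) := by
  have h1 : onePlusXU ^ (Int.negSucc N) =
      Units.map (PowerSeries.rescale (-1 : ℤ)).toMonoidHom
        (PowerSeries.invOneSubPow ℤ (N + 1)) := by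
    rw [zpow_negSucc, onePlusXU, ← MonoidHom.map_pow, ← MonoidHom.map_inv]
    congr 1
    rw [oneSubXU, ← inv_pow, inv_inv]
    rw [PowerSeries.invOneSubPow_eq_inv_one_sub_pow (S := ℤ) (d := N + 1),
        PowerSeries.invOneSubPow_eq_inv_one_sub_pow (S := ℤ) (d := 1), pow_one]
  rw [h1]
  show (PowerSeries.coeff (R := ℤ) j) (PowerSeries.rescale (-1 : ℤ)
      (PowerSeries.invOneSubPow ℤ (N + 1)).val) = _
  rw [PowerSeries.invOneSubPow_val_succ_eq_mk_add_choose,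
      PowerSeries.coeff_rescale, PowerSeries.coeff_mk]

lemma coeff_onePlusXU_zpow (n : ℤ) (j : ℕ) :
    (PowerSeries.coeff (R := ℤ) j) ((onePlusXU ^ n).val) = genBinom n (j : ℤ) := by
  cases n with
  | ofNat N =>
      rw [Int.ofNat_eq_natCast, coeff_onePlusXU_pow]
      unfold genBinom
      by_cases h : (j : ℤ) ≤ (N : ℤ)
      · rw [if_pos ⟨by positivity, h⟩, Int.toNat_natCast, Int.toNat_natCast]
      · rw [if_neg (by omega), if_neg (by omega), if_neg (by omega)]
        exact_mod_cast congrArg (Nat.cast : ℕ → ℤ)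
          (Nat.choose_eq_zero_of_lt (by exact_mod_cast not_le.mp h))
  | negSucc N =>
      rw [coeff_onePlusXU_zpow_neg]
      unfold genBinom
      rw [if_neg (by rw [Int.negSucc_eq]; omega),
        if_pos ⟨by rw [Int.negSucc_eq]; omega, by positivity⟩, Int.toNat_natCast]
      have h2 : ((j : ℤ) - Int.negSucc N - 1).toNat = j + N := by
        rw [Int.negSucc_eq]; omega
      rw [h2]
      congr 1
      rw [Nat.add_comm j N, Nat.choose_symm_add]

theorem genBinom_chu_vandermonde (n m k : ℤ) (hk : 0 ≤ k) :
    ∑ j ∈ Finset.range (k.toNat + 1), genBinom n j * genBinom m (k - j) =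
      genBinom (n + m) k := by
  have hkk : ((k.toNat : ℤ)) = k := Int.toNat_of_nonneg hk
  have key : (PowerSeries.coeff (R := ℤ) k.toNat) ((onePlusXU ^ (n + m)).val) = genBinom (n + m) k := by
    rw [coeff_onePlusXU_zpow, hkk]
  rw [← key, zpow_add, Units.val_mul, PowerSeries.coeff_mul,
    Finset.Nat.sum_antidiagonal_eq_sum_range_succ_mk]
  refine Finset.sum_congr rfl fun j hj => ?_
  rw [Finset.mem_range, Nat.lt_succ_iff] at hj
  rw [coeff_onePlusXU_zpow, coeff_onePlusXU_zpow]
  congr 1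
  congr 1
  omega
end

section
/- For all negative integers n, m, and k, one has ∑_{j=k+1}^{-1} C(n,j) · C(m,k-j) = C(n+m,k), where the sum runs over integers j with k < j < 0. (Chu–Vandermonde identity for negative upper and lower entries.) -/
open Finset

lemma sum_range_choose_col (N a : ℕ) :
    ∑ i ∈ range (N + 1), i.choose a = (N + 1).choose (a + 1) := by
  rcases le_or_gt a N with h | h
  · rw [← Nat.sum_Icc_choose N a]
    symm
    apply Finset.sum_subset
    · intro x hx; simp at hx ⊢; omega
    · intro x hx hx'
      simp at hx hx'
      exact Nat.choose_eq_zero_of_lt (by omega)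
  · rw [Nat.choose_eq_zero_of_lt (by omega)]
    apply Finset.sum_eq_zero
    intro x hx
    simp at hx
    exact Nat.choose_eq_zero_of_lt (by omega)

lemma dual_vandermonde (N a b : ℕ) :
    ∑ i ∈ range (N + 1), i.choose a * (N - i).choose b = (N + 1).choose (a + b + 1) := by
  induction N generalizing b with
  | zero =>
    cases a <;> cases b <;> simp [Nat.choose]
  | succ N ih =>
    cases b with
    | zero => simpa using sum_range_choose_col (N + 1) a
    | succ b =>
      rw [Finset.sum_range_succ]
      have h0 : (N + 1 - (N + 1)).choose (b + 1) = 0 := by simp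
      rw [h0, mul_zero, add_zero]
      have hsplit : ∀ i ∈ range (N + 1),
          i.choose a * (N + 1 - i).choose (b + 1)
            = i.choose a * (N - i).choose (b + 1) + i.choose a * (N - i).choose b := by
        intro i hi
        simp only [mem_range] at hi
        have h : N + 1 - i = (N - i) + 1 := by omega
        rw [h, Nat.choose_succ_succ, Nat.mul_add, Nat.succ_eq_add_one]
        ring
      rw [Finset.sum_congr rfl hsplit, Finset.sum_add_distrib, ih (b + 1), ih b,
        show a + (b + 1) + 1 = (a + b + 1) + 1 by ring,
        Nat.choose_succ_succ (N + 1) (a + b + 1)]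
      ring

lemma genBinom_of_neg (n k : ℤ) (hn : n < 0) (hk : k < 0) :
    genBinom n k =
      if k ≤ n then (-1) ^ (n - k).toNat * ((-k - 1).toNat.choose (-n - 1).toNat : ℤ)
      else 0 := by
  unfold genBinom
  rw [if_neg (by omega), if_neg (by omega)]
  by_cases h : k ≤ n
  · rw [if_pos ⟨h, hn⟩, if_pos h]
  · rw [if_neg (by tauto), if_neg h]

theorem genBinom_chu_vandermonde_neg (n m k : ℤ) (hn : n < 0) (hm : m < 0) (hk : k < 0) :
    ∑ i ∈ Finset.range (-k - 1).toNat,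
        genBinom n (-(i + 1 : ℤ)) * genBinom m (k + (i + 1 : ℤ)) =
      genBinom (n + m) k := by
  set A := (-n - 1).toNat with hA
  set B := (-m - 1).toNat with hB
  have key : ∀ i ∈ Finset.range (-k - 1).toNat,
      genBinom n (-(i + 1 : ℤ)) * genBinom m (k + (i + 1 : ℤ))
        = (-1) ^ (n + m - k).toNat *
            ((i.choose A : ℤ) * ((((-k - 2).toNat - i).choose B : ℤ))) := by
    intro i hi
    simp only [mem_range] at hi
    rw [genBinom_of_neg n _ hn (by omega), genBinom_of_neg m _ hm (by omega)]
    have e1 : (-(-(↑i + 1 : ℤ)) - 1).toNat = i := by omega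
    have e2 : (-(k + (↑i + 1)) - 1).toNat = (-k - 2).toNat - i := by omega
    by_cases h1 : -(↑i + 1 : ℤ) ≤ n
    · by_cases h2 : k + (↑i + 1 : ℤ) ≤ m
      · rw [if_pos h1, if_pos h2, e1, e2]
        have hexp : (n - -(↑i + 1 : ℤ)).toNat + (m - (k + (↑i + 1))).toNat
            = (n + m - k).toNat := by omega
        rw [← hexp, pow_add]
        ring
      · rw [if_pos h1, if_neg h2, mul_zero,
          Nat.choose_eq_zero_of_lt (show (-k - 2).toNat - i < B by omega)]
        simp
    · rw [if_neg h1, zero_mul,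
        Nat.choose_eq_zero_of_lt (show i < A by omega)]
      simp
  rw [Finset.sum_congr rfl key, ← Finset.mul_sum]
  have hR : genBinom (n + m) k
      = (-1) ^ (n + m - k).toNat * (((-k - 1).toNat).choose (A + B + 1) : ℤ) := by
    rw [genBinom_of_neg _ _ (by omega) hk]
    by_cases h : k ≤ n + m
    · rw [if_pos h, show (-(n + m) - 1).toNat = A + B + 1 by omega]
    · rw [if_neg h,
        Nat.choose_eq_zero_of_lt (show (-k - 1).toNat < A + B + 1 by omega)]
      simp
  rw [hR]
  congr 1
  rcases eq_or_lt_of_le (show k ≤ -1 by omega) with hk1 | hk1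
  · subst hk1
    norm_num
  · have hrange : (-k - 1).toNat = (-k - 2).toNat + 1 := by omega
    rw [hrange]
    exact_mod_cast dual_vandermonde ((-k - 2).toNat) A B
end

section
/- For all integers n and k with k ≠ 0 such that all three coefficients are defined by the closed formulas below, one has k · C(n,k) = n · C(n-1,k-1). (The absorption/hypergeometric identity extended to all integer entries.) -/
lemma nat_absorb (a b : ℕ) : (a + 1) * (b + 1).choose (a + 1) = (b + 1) * b.choose a := by
  have := Nat.add_one_mul_choose_eq b a
  simpa [Nat.succ_eq_add_one, mul_comm] using this.symm

theorem genBinom_absorption (n k : ℤ) (hk : k ≠ 0) :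
    k * genBinom n k = n * genBinom (n - 1) (k - 1) := by
  unfold genBinom
  split_ifs with h1 h2 h3 h4 h5 h6 h7 h8 h9 h10 h11 h12 <;>
    try omega
  · -- 0 ≤ k ≤ n, 0 ≤ k-1 ≤ n-1
    obtain ⟨a, rfl⟩ : ∃ a : ℕ, k = (a : ℤ) + 1 := ⟨(k - 1).toNat, by omega⟩
    obtain ⟨b, rfl⟩ : ∃ b : ℕ, n = (b : ℤ) + 1 := ⟨(n - 1).toNat, by omega⟩
    have e1 : ((a : ℤ) + 1).toNat = a + 1 := by omega
    have e2 : ((b : ℤ) + 1).toNat = b + 1 := by omega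
    have e3 : ((b : ℤ) + 1 - 1).toNat = b := by omega
    have e4 : ((a : ℤ) + 1 - 1).toNat = a := by omega
    rw [e1, e2, e3, e4]
    exact_mod_cast congrArg (Nat.cast : ℕ → ℤ) (nat_absorb a b)
  · -- n < 0 ≤ k, case 2 both
    obtain ⟨a, rfl⟩ : ∃ a : ℕ, k = (a : ℤ) + 1 := ⟨(k - 1).toNat, by omega⟩
    obtain ⟨b, rfl⟩ : ∃ b : ℕ, n = -((b : ℤ) + 1) := ⟨(-n - 1).toNat, by omega⟩
    have e1 : ((a : ℤ) + 1).toNat = a + 1 := by omega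
    have e2 : ((a : ℤ) + 1 - -((b : ℤ) + 1) - 1).toNat = a + b + 1 := by omega
    have e3 : ((a : ℤ) + 1 - 1).toNat = a := by omega
    have e4 : ((a : ℤ) + 1 - 1 - (-((b : ℤ) + 1) - 1) - 1).toNat = a + b + 1 := by omega
    rw [e1, e2, e3, e4]
    have key : (a + b + 1).choose (a + 1) * (a + 1) = (a + b + 1).choose a * (b + 1) := by
      rw [Nat.choose_succ_right_eq]
      congr 1
      omega
    have keyZ : ((a + b + 1).choose (a + 1) : ℤ) * ((a : ℤ) + 1)
        = ((a + b + 1).choose a : ℤ) * ((b : ℤ) + 1) := by exact_mod_cast key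
    rw [pow_succ]
    linear_combination (-(-1 : ℤ) ^ a) * keyZ
  · -- k ≤ n < 0, case 3 both
    obtain ⟨a, rfl⟩ : ∃ a : ℕ, n = -((a : ℤ) + 1) := ⟨(-n - 1).toNat, by omega⟩
    obtain ⟨b, rfl⟩ : ∃ b : ℕ, k = -((b : ℤ) + 1) := ⟨(-k - 1).toNat, by omega⟩
    have e1 : (-((a : ℤ) + 1) - -((b : ℤ) + 1)).toNat = b - a := by omega
    have e2 : (-(-((b : ℤ) + 1)) - 1).toNat = b := by omega
    have e3 : (-(-((a : ℤ) + 1)) - 1).toNat = a := by omega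
    have e4 : (-((a : ℤ) + 1) - 1 - (-((b : ℤ) + 1) - 1)).toNat = b - a := by omega
    have e5 : (-(-((b : ℤ) + 1) - 1) - 1).toNat = b + 1 := by omega
    have e6 : (-(-((a : ℤ) + 1) - 1) - 1).toNat = a + 1 := by omega
    rw [e1, e2, e3, e4, e5, e6]
    have keyZ : ((a : ℤ) + 1) * ((b + 1).choose (a + 1) : ℤ)
        = ((b : ℤ) + 1) * (b.choose a : ℤ) := by exact_mod_cast nat_absorb a b
    linear_combination (-1 : ℤ) ^ (b - a) * keyZ
  · have hn : n = 0 := by omega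
    simp [hn]
  · have hn : n = 0 := by omega
    simp [hn]
end

section
/- Define the generalized q-binomial coefficient as a Laurent polynomial over ℤ by: for 0 ≤ k ≤ n, the usual Gaussian binomial; for n < 0 ≤ k, qbinom(n,k) = (-1)^k · q^{k(2n-k+1)/2} · gauss(k-n-1, k); for k ≤ n < 0, qbinom(n,k) = (-1)^{n-k} · q^{(n(n+1)-k(k+1))/2} · gauss(-k-1, -n-1); otherwise 0. Then for all integers n and k with (n,k) ≠ (0,0), the q-Pascal rule holds: qbinom(n,k) = qbinom(n-1,k-1) + q^k · qbinom(n-1,k). -/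
open LaurentPolynomial in
/-- The ordinary Gaussian binomial coefficient as a (Laurent) polynomial in `q = T 1`,
defined by the `q`-Pascal rule; it is `0` when the lower entry exceeds the upper one. -/
noncomputable def gauss : ℕ → ℕ → LaurentPolynomial ℤ
  | _, 0 => 1
  | 0, _ + 1 => 0
  | a + 1, b + 1 => gauss a b + T ((b : ℤ) + 1) * gauss a (b + 1)

open LaurentPolynomial in
/-- The generalized `q`-binomial coefficient, a Laurent polynomial in `q = T 1`,
extended to arbitrary integer entries. -/
noncomputable def qbinom (n k : ℤ) : LaurentPolynomial ℤ :=
  if 0 ≤ k ∧ k ≤ n then gauss n.toNat k.toNat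
  else if n < 0 ∧ 0 ≤ k then
    (-1) ^ k.toNat * T (k * (2 * n - k + 1) / 2) * gauss (k - n - 1).toNat k.toNat
  else if k ≤ n ∧ n < 0 then
    (-1) ^ (n - k).toNat * T ((n * (n + 1) - k * (k + 1)) / 2) *
      gauss (-k - 1).toNat (-n - 1).toNat
  else 0

open LaurentPolynomial

lemma gauss_zero' (a : ℕ) : gauss a 0 = 1 := by cases a <;> rfl

lemma gauss_succ (a b : ℕ) :
    gauss (a+1) (b+1) = gauss a b + T ((b:ℤ)+1) * gauss a (b+1) := rfl

lemma gauss_of_lt : ∀ a b : ℕ, a < b → gauss a b = 0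
  | 0, _+1, _ => rfl
  | a+1, b+1, h => by
      rw [gauss_succ, gauss_of_lt a b (by omega), gauss_of_lt a (b+1) (by omega)]
      simp

lemma gauss_self : ∀ a : ℕ, gauss a a = 1
  | 0 => rfl
  | a+1 => by
      rw [gauss_succ, gauss_self a, gauss_of_lt a (a+1) (by omega)]
      simp

lemma Tmul (x y z : ℤ) (h : x + y = z) :
    (T x : LaurentPolynomial ℤ) * T y = T z := by rw [← T_add, h]

lemma gauss_pascal' : ∀ a b : ℕ,
    gauss (a+1) (b+1) = T ((a:ℤ) - b) * gauss a b + gauss a (b+1)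
  | 0, 0 => by
      rw [gauss_succ, gauss_of_lt 0 1 (by omega)]
      simp
  | 0, b+1 => by
      rw [gauss_succ, gauss_of_lt 0 (b+1) (by omega), gauss_of_lt 0 (b+2) (by omega)]
      simp
  | a+1, 0 => by
      have h1 := Tmul (1:ℤ) ((a:ℤ)) ((a:ℤ)+1) (by ring)
      conv_lhs => rw [gauss_succ (a+1) 0, gauss_pascal' a 0]
      conv_rhs => rw [gauss_succ a 0]
      push_cast
      simp only [gauss_zero', show ((0:ℤ)+1) = 1 from by norm_num, sub_zero]
      linear_combination h1
  | a+1, b+1 => by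
      have h1 := Tmul (((b:ℤ)+1)+1) ((a:ℤ) - ((b:ℤ)+1)) ((a:ℤ)+1) (by ring)
      have h2 := Tmul (((a:ℤ)+1) - ((b:ℤ)+1)) ((b:ℤ)+1) ((a:ℤ)+1) (by ring)
      have h3 : (T ((a:ℤ)+1-((b:ℤ)+1)) : LaurentPolynomial ℤ) = T ((a:ℤ)-(b:ℤ)) := by
        rw [show ((a:ℤ)+1-((b:ℤ)+1)) = (a:ℤ)-(b:ℤ) by ring]
      conv_lhs => rw [gauss_succ (a+1) (b+1), gauss_pascal' a b, gauss_pascal' a (b+1)]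
      conv_rhs => rw [gauss_succ a b, gauss_succ a (b+1)]
      push_cast
      linear_combination (gauss a (b+1) : LaurentPolynomial ℤ) * h1
        - (gauss a (b+1) : LaurentPolynomial ℤ) * h2
        - (gauss a b : LaurentPolynomial ℤ) * h3

lemma qbinom_pos (n k : ℤ) (h1 : 0 ≤ k) (h2 : k ≤ n) :
    qbinom n k = gauss n.toNat k.toNat := by
  rw [qbinom, if_pos ⟨h1, h2⟩]

lemma qbinom_negpos (n k : ℤ) (h1 : n < 0) (h2 : 0 ≤ k) :
    qbinom n k = (-1) ^ k.toNat * T (k * (2 * n - k + 1) / 2)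
      * gauss (k - n - 1).toNat k.toNat := by
  rw [qbinom, if_neg (by omega), if_pos ⟨h1, h2⟩]

lemma qbinom_negneg (n k : ℤ) (h1 : k ≤ n) (h2 : n < 0) :
    qbinom n k = (-1) ^ (n - k).toNat * T ((n * (n + 1) - k * (k + 1)) / 2)
      * gauss (-k - 1).toNat (-n - 1).toNat := by
  rw [qbinom, if_neg (by omega), if_neg (by omega), if_pos ⟨h1, h2⟩]

lemma qbinom_zero (n k : ℤ) (h1 : ¬(0 ≤ k ∧ k ≤ n)) (h2 : ¬(n < 0 ∧ 0 ≤ k))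
    (h3 : ¬(k ≤ n ∧ n < 0)) : qbinom n k = 0 := by
  rw [qbinom, if_neg h1, if_neg h2, if_neg h3]

open LaurentPolynomial in
theorem qbinom_pascal (n k : ℤ) (h : (n, k) ≠ (0, 0)) :
    qbinom n k = qbinom (n - 1) (k - 1) + T k * qbinom (n - 1) k := by
  have hne : ¬(n = 0 ∧ k = 0) := by simpa [Prod.ext_iff] using h
  rcases le_or_gt 0 k with hk0 | hk0
  · rcases le_or_gt k n with hkn | hkn
    · -- case A : 0 ≤ k ≤ n
      rcases eq_or_lt_of_le hk0 with hk | hk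
      · -- A1 : k = 0, n ≥ 1
        subst hk
        rw [qbinom_pos n 0 (by omega) (by omega),
          qbinom_zero (n-1) (0-1) (by omega) (by omega) (by omega),
          qbinom_pos (n-1) 0 (by omega) (by omega)]
        simp [gauss_zero', T_zero]
      · rcases eq_or_lt_of_le hkn with hkn' | hkn'
        · -- A2 : 1 ≤ k = n
          subst hkn'
          obtain ⟨b, rfl⟩ : ∃ b : ℕ, k = (b:ℤ)+1 := ⟨(k-1).toNat, by omega⟩
          rw [qbinom_pos ((b:ℤ)+1) ((b:ℤ)+1) (by omega) (by omega),
            qbinom_pos ((b:ℤ)+1-1) ((b:ℤ)+1-1) (by omega) (by omega),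
            qbinom_zero ((b:ℤ)+1-1) ((b:ℤ)+1) (by omega) (by omega) (by omega),
            show ((b:ℤ)+1).toNat = b+1 by omega, show ((b:ℤ)+1-1).toNat = b by omega,
            gauss_self, gauss_self]
          ring
        · -- A3 : 1 ≤ k ≤ n - 1
          obtain ⟨b, rfl⟩ : ∃ b : ℕ, k = (b:ℤ)+1 := ⟨(k-1).toNat, by omega⟩
          obtain ⟨a, rfl⟩ : ∃ a : ℕ, n = (a:ℤ)+1 := ⟨(n-1).toNat, by omega⟩
          rw [qbinom_pos ((a:ℤ)+1) ((b:ℤ)+1) (by omega) (by omega),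
            qbinom_pos ((a:ℤ)+1-1) ((b:ℤ)+1-1) (by omega) (by omega),
            qbinom_pos ((a:ℤ)+1-1) ((b:ℤ)+1) (by omega) (by omega),
            show ((a:ℤ)+1).toNat = a+1 by omega, show ((b:ℤ)+1).toNat = b+1 by omega,
            show ((a:ℤ)+1-1).toNat = a by omega, show ((b:ℤ)+1-1).toNat = b by omega,
            gauss_succ]
    · rcases le_or_gt 0 n with hn0 | hn0
      · -- D2/D4 : 0 ≤ n < k
        rcases eq_or_lt_of_le hn0 with hn | hn
        · -- n = 0, k ≥ 1
          subst hn
          obtain ⟨c, rfl⟩ : ∃ c : ℕ, k = (c:ℤ)+1 := ⟨(k-1).toNat, by omega⟩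
          obtain ⟨r, hr⟩ := Int.even_mul_succ_self (c:ℤ)
          rw [qbinom_zero 0 ((c:ℤ)+1) (by omega) (by omega) (by omega),
            qbinom_negpos (0-1) ((c:ℤ)+1-1) (by omega) (by omega),
            qbinom_negpos (0-1) ((c:ℤ)+1) (by omega) (by omega),
            show ((c:ℤ)+1-1).toNat = c by omega,
            show ((c:ℤ)+1-1 - (0-1) - 1).toNat = c by omega,
            show ((c:ℤ)+1).toNat = c+1 by omega,
            show ((c:ℤ)+1 - (0-1) - 1).toNat = c+1 by omega,
            show ((c:ℤ)+1-1) * (2 * (0-1) - ((c:ℤ)+1-1) + 1) = 2 * (-r) from by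
              linear_combination -hr,
            show ((c:ℤ)+1) * (2 * (0-1) - ((c:ℤ)+1) + 1) = 2 * (-(r+(c:ℤ)+1)) from by
              linear_combination -hr,
            Int.mul_ediv_cancel_left _ (by norm_num : (2:ℤ) ≠ 0),
            Int.mul_ediv_cancel_left _ (by norm_num : (2:ℤ) ≠ 0),
            gauss_self, gauss_self]
          have h := Tmul ((c:ℤ)+1) (-(r+(c:ℤ)+1)) (-r) (by ring)
          linear_combination ((-1 : LaurentPolynomial ℤ))^c * h
        · -- n ≥ 1 < k
          rw [qbinom_zero n k (by omega) (by omega) (by omega),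
            qbinom_zero (n-1) (k-1) (by omega) (by omega) (by omega),
            qbinom_zero (n-1) k (by omega) (by omega) (by omega)]
          ring
      · -- case B : n < 0 ≤ k
        rcases eq_or_lt_of_le hk0 with hk | hk
        · -- B1 : k = 0
          subst hk
          rw [qbinom_negpos n 0 (by omega) (by omega),
            qbinom_zero (n-1) (0-1) (by omega) (by omega) (by omega),
            qbinom_negpos (n-1) 0 (by omega) (by omega)]
          simp [gauss_zero', T_zero]
        · -- B2 : k ≥ 1
          obtain ⟨b, rfl⟩ : ∃ b : ℕ, k = (b:ℤ)+1 := ⟨(k-1).toNat, by omega⟩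
          obtain ⟨m, rfl⟩ : ∃ m : ℕ, n = -((m:ℤ)+1) := ⟨(-n-1).toNat, by omega⟩
          obtain ⟨r, hr⟩ := Int.even_mul_succ_self (b:ℤ)
          rw [qbinom_negpos (-((m:ℤ)+1)) ((b:ℤ)+1) (by omega) (by omega),
            qbinom_negpos (-((m:ℤ)+1)-1) ((b:ℤ)+1-1) (by omega) (by omega),
            qbinom_negpos (-((m:ℤ)+1)-1) ((b:ℤ)+1) (by omega) (by omega),
            show ((b:ℤ)+1).toNat = b+1 by omega,
            show ((b:ℤ)+1-1).toNat = b by omega,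
            show ((b:ℤ)+1 - (-((m:ℤ)+1)) - 1).toNat = b+m+1 by omega,
            show ((b:ℤ)+1-1 - (-((m:ℤ)+1)-1) - 1).toNat = b+m+1 by omega,
            show ((b:ℤ)+1 - (-((m:ℤ)+1)-1) - 1).toNat = b+m+1+1 by omega,
            show ((b:ℤ)+1) * (2 * (-((m:ℤ)+1)) - ((b:ℤ)+1) + 1)
                = 2 * (-((m:ℤ)+1)*((b:ℤ)+1) - r) from by linear_combination -hr,
            show ((b:ℤ)+1-1) * (2 * (-((m:ℤ)+1)-1) - ((b:ℤ)+1-1) + 1)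
                = 2 * (-((m:ℤ)+1)*(b:ℤ) - r) from by linear_combination -hr,
            show ((b:ℤ)+1) * (2 * (-((m:ℤ)+1)-1) - ((b:ℤ)+1) + 1)
                = 2 * (-((m:ℤ)+1)*((b:ℤ)+1) - r - ((b:ℤ)+1)) from by linear_combination -hr,
            Int.mul_ediv_cancel_left _ (by norm_num : (2:ℤ) ≠ 0),
            Int.mul_ediv_cancel_left _ (by norm_num : (2:ℤ) ≠ 0),
            Int.mul_ediv_cancel_left _ (by norm_num : (2:ℤ) ≠ 0),
            gauss_pascal' (b+m+1) b]
          have h1 := Tmul ((b:ℤ)+1) (-((m:ℤ)+1)*((b:ℤ)+1) - r - ((b:ℤ)+1))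
            (-((m:ℤ)+1)*((b:ℤ)+1) - r) (by ring)
          have h2 : (T ((b:ℤ)+1) : LaurentPolynomial ℤ)
              * T (-((m:ℤ)+1)*((b:ℤ)+1) - r - ((b:ℤ)+1)) * T ((↑(b+m+1):ℤ) - ↑b)
              = T (-((m:ℤ)+1)*(b:ℤ) - r) := by
            rw [h1]; exact Tmul _ _ _ (by push_cast; ring)
          linear_combination ((-1 : LaurentPolynomial ℤ))^b * gauss (b+m+1) (b+1) * h1
            + ((-1 : LaurentPolynomial ℤ))^b * gauss (b+m+1) b * h2
  · rcases le_or_gt 0 n with hn0 | hn0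
    · -- D1/D3 : k < 0 ≤ n
      rcases eq_or_lt_of_le hn0 with hn | hn
      · -- n = 0, k < 0
        subst hn
        obtain ⟨c, rfl⟩ : ∃ c : ℕ, k = -((c:ℤ)+1) := ⟨(-k-1).toNat, by omega⟩
        obtain ⟨r, hr⟩ := Int.even_mul_succ_self ((c:ℤ)+1)
        rw [qbinom_zero 0 (-((c:ℤ)+1)) (by omega) (by omega) (by omega),
          qbinom_negneg (0-1) (-((c:ℤ)+1)-1) (by omega) (by omega),
          qbinom_negneg (0-1) (-((c:ℤ)+1)) (by omega) (by omega),
          show ((0:ℤ)-1 - (-((c:ℤ)+1)-1)).toNat = c+1 by omega,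
          show (-(-((c:ℤ)+1)-1) - 1).toNat = c+1 by omega,
          show ((0:ℤ)-1 - (-((c:ℤ)+1))).toNat = c by omega,
          show (-(-((c:ℤ)+1)) - 1).toNat = c by omega,
          show (-(0-1) - 1 : ℤ).toNat = 0 by omega,
          show ((0:ℤ)-1) * ((0-1) + 1) - (-((c:ℤ)+1)-1) * ((-((c:ℤ)+1)-1) + 1)
              = 2 * (-r) from by linear_combination -hr,
          show ((0:ℤ)-1) * ((0-1) + 1) - (-((c:ℤ)+1)) * ((-((c:ℤ)+1)) + 1)
              = 2 * ((c:ℤ)+1-r) from by linear_combination -hr,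
          Int.mul_ediv_cancel_left _ (by norm_num : (2:ℤ) ≠ 0),
          Int.mul_ediv_cancel_left _ (by norm_num : (2:ℤ) ≠ 0),
          gauss_zero', gauss_zero']
        have h := Tmul (-((c:ℤ)+1)) ((c:ℤ)+1-r) (-r) (by ring)
        linear_combination -((-1 : LaurentPolynomial ℤ))^c * h
      · -- n ≥ 1, k < 0
        rw [qbinom_zero n k (by omega) (by omega) (by omega),
          qbinom_zero (n-1) (k-1) (by omega) (by omega) (by omega),
          qbinom_zero (n-1) k (by omega) (by omega) (by omega)]
        ring
    · -- case C : k < 0, n < 0 (note k ≤ n automatic? no!)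
      rcases le_or_gt k n with hkn | hkn
      · rcases eq_or_lt_of_le hkn with hkn' | hkn'
        · -- C1 : k = n < 0
          subst hkn'
          rw [qbinom_negneg k k (by omega) (by omega),
            qbinom_negneg (k-1) (k-1) (by omega) (by omega),
            qbinom_zero (k-1) k (by omega) (by omega) (by omega)]
          simp [sub_self, Int.zero_ediv, Int.toNat_zero, T_zero, gauss_self]
        · -- C2 : k ≤ n - 1 < 0
          obtain ⟨s, rfl⟩ : ∃ s : ℕ, n = -((s:ℤ)+1) := ⟨(-n-1).toNat, by omega⟩
          obtain ⟨d, rfl⟩ : ∃ d : ℕ, k = -((s:ℤ)+(d:ℤ)+2) :=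
            ⟨(-k-(s:ℤ)-2).toNat, by omega⟩
          obtain ⟨p, hp⟩ := Int.even_mul_succ_self (-((s:ℤ)+1))
          obtain ⟨u, hu⟩ := Int.even_mul_succ_self (-((s:ℤ)+(d:ℤ)+2))
          rw [qbinom_negneg (-((s:ℤ)+1)) (-((s:ℤ)+(d:ℤ)+2)) (by omega) (by omega),
            qbinom_negneg (-((s:ℤ)+1)-1) (-((s:ℤ)+(d:ℤ)+2)-1) (by omega) (by omega),
            qbinom_negneg (-((s:ℤ)+1)-1) (-((s:ℤ)+(d:ℤ)+2)) (by omega) (by omega),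
            show (-((s:ℤ)+1) - (-((s:ℤ)+(d:ℤ)+2))).toNat = d+1 by omega,
            show (-(-((s:ℤ)+(d:ℤ)+2)) - 1).toNat = s+d+1 by omega,
            show (-(-((s:ℤ)+1)) - 1).toNat = s by omega,
            show (-((s:ℤ)+1)-1 - (-((s:ℤ)+(d:ℤ)+2)-1)).toNat = d+1 by omega,
            show (-(-((s:ℤ)+(d:ℤ)+2)-1) - 1).toNat = s+d+1+1 by omega,
            show (-(-((s:ℤ)+1)-1) - 1).toNat = s+1 by omega,
            show (-((s:ℤ)+1)-1 - (-((s:ℤ)+(d:ℤ)+2))).toNat = d by omega,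
            show (-((s:ℤ)+1)) * (-((s:ℤ)+1) + 1) - (-((s:ℤ)+(d:ℤ)+2)) * (-((s:ℤ)+(d:ℤ)+2) + 1)
                = 2 * (p - u) from by linear_combination hp - hu,
            show (-((s:ℤ)+1)-1) * ((-((s:ℤ)+1)-1) + 1)
                  - (-((s:ℤ)+(d:ℤ)+2)-1) * ((-((s:ℤ)+(d:ℤ)+2)-1) + 1)
                = 2 * (p - u - (d:ℤ) - 1) from by linear_combination hp - hu,
            show (-((s:ℤ)+1)-1) * ((-((s:ℤ)+1)-1) + 1)
                  - (-((s:ℤ)+(d:ℤ)+2)) * ((-((s:ℤ)+(d:ℤ)+2)) + 1)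
                = 2 * (p - u + (s:ℤ) + 1) from by linear_combination hp - hu,
            Int.mul_ediv_cancel_left _ (by norm_num : (2:ℤ) ≠ 0),
            Int.mul_ediv_cancel_left _ (by norm_num : (2:ℤ) ≠ 0),
            Int.mul_ediv_cancel_left _ (by norm_num : (2:ℤ) ≠ 0),
            gauss_pascal' (s+d+1) s]
          have h1 := Tmul (p - u - (d:ℤ) - 1) ((↑(s+d+1):ℤ) - ↑s) (p - u)
            (by push_cast; ring)
          have h2 := Tmul (-((s:ℤ)+(d:ℤ)+2)) (p - u + (s:ℤ) + 1) (p - u - (d:ℤ) - 1)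
            (by ring)
          linear_combination (-((-1 : LaurentPolynomial ℤ))^(d+1)) * gauss (s+d+1) s * h1
            + ((-1 : LaurentPolynomial ℤ))^(d+1) * gauss (s+d+1) (s+1) * h2
      · -- n < k < 0 : zero case
        rw [qbinom_zero n k (by omega) (by omega) (by omega),
          qbinom_zero (n-1) (k-1) (by omega) (by omega) (by omega),
          qbinom_zero (n-1) k (by omega) (by omega) (by omega)]
        ring
end

section
/- Define A(n) = ∑_{k ∈ ℤ} C(n,k)² · C(n+k,k)² for all integers n, where C is Loeb's generalized binomial coefficient (the sum has finitely many nonzero terms). Then A(-n) = A(n-1) for every integer n. -/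
/-- The Apéry numbers, extended to all integers via Loeb's generalized binomial
coefficients: `A n = ∑_{k ∈ ℤ} C(n,k)² C(n+k,k)²` (a finitely supported sum). -/
noncomputable def aperyExt (n : ℤ) : ℤ :=
  ∑ᶠ k : ℤ, (genBinom n k) ^ 2 * (genBinom (n + k) k) ^ 2

lemma gb_pos (n k : ℤ) (h1 : 0 ≤ k) (h2 : k ≤ n) :
    genBinom n k = (n.toNat.choose k.toNat : ℤ) := by
  unfold genBinom; rw [if_pos ⟨h1, h2⟩]

lemma gb_neg_pos (n k : ℤ) (h1 : n < 0) (h2 : 0 ≤ k) :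
    genBinom n k = (-1) ^ k.toNat * ((k - n - 1).toNat.choose k.toNat : ℤ) := by
  unfold genBinom
  rw [if_neg (by omega), if_pos ⟨h1, h2⟩]

lemma gb_zero_of (n k : ℤ) (h1 : ¬(0 ≤ k ∧ k ≤ n)) (h2 : ¬(n < 0 ∧ 0 ≤ k))
    (h3 : ¬(k ≤ n ∧ n < 0)) : genBinom n k = 0 := by
  unfold genBinom; rw [if_neg h1, if_neg h2, if_neg h3]

lemma key1 (n k : ℤ) (hn : 1 ≤ n) :
    genBinom (-n) k ^ 2 * genBinom (-n + k) k ^ 2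
      = genBinom (n - 1) k ^ 2 * genBinom (n - 1 + k) k ^ 2 := by
  rcases lt_or_ge k 0 with hk | hk
  · rw [gb_zero_of (-n + k) k (by omega) (by omega) (by omega),
      gb_zero_of (n - 1) k (by omega) (by omega) (by omega)]
    ring
  · rcases lt_or_ge (n - 1) k with hk2 | hk2
    · rw [gb_zero_of (-n + k) k (by omega) (by omega) (by omega),
        gb_zero_of (n - 1) k (by omega) (by omega) (by omega)]
      ring
    · rw [gb_neg_pos (-n) k (by omega) hk, gb_neg_pos (-n + k) k (by omega) hk,
        gb_pos (n - 1) k hk (by omega), gb_pos (n - 1 + k) k hk (by omega)]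
      have e1 : (k - -n - 1).toNat = (n - 1 + k).toNat := by omega
      have e2 : (k - (-n + k) - 1).toNat = (n - 1).toNat := by omega
      rw [e1, e2]
      have hsq : ((-1 : ℤ) ^ k.toNat) ^ 2 = 1 := by
        rw [← pow_mul, mul_comm, pow_mul]; norm_num
      rw [mul_pow, mul_pow, hsq]
      ring

lemma key (n k : ℤ) :
    genBinom (-n) k ^ 2 * genBinom (-n + k) k ^ 2
      = genBinom (n - 1) k ^ 2 * genBinom (n - 1 + k) k ^ 2 := by
  rcases le_or_gt 1 n with h | h
  · exact key1 n k h
  · have H := (key1 (1 - n) k (by omega))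
    rw [show -(1 - n) = n - 1 by ring] at H
    rw [show (1 - n) - 1 = -n by ring] at H
    exact H.symm

theorem aperyExt_reflection (n : ℤ) : aperyExt (-n) = aperyExt (n - 1) := by
  unfold aperyExt
  exact finsum_congr fun k => key n k
end
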